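/- arXiv:0903.2849 — 3 statements merged into one kernel-verified Lean document; each statement's English description precedes it below -/
import Mathlib

section
/- In any commutative Hopf algebra H, if I is an ideal satisfying \Delta(I) \subseteq I \otimes H + H \otimes I and \epsilon(I) = 0, then S(I) \subseteq I; that is, every biideal of a commutative Hopf algebra is automatically a Hopf ideal. -/
open TensorProduct

section Aux

/-- Abstract Noetherian chain argument. -/
theorem aux_noetherian_step {R B : Type*} [CommRing R] [IsNoetherianRing R]
    [AddCommGroup B] [Module R B]
    (f f' : B →ₗ[R] B) (hff' : ∀ b, f (f' b) = b)
    (J M : Submodule R B) (hM : M.FG)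
    (hJf : ∀ b ∈ J, f b ∈ J) (hMf' : ∀ b ∈ M, f' b ∈ M)
    (b₀ : B) (hbM : b₀ ∈ M) (hbJ : b₀ ∈ J) : f' b₀ ∈ J := by
  haveI : IsNoetherian R M := isNoetherian_of_fg_of_noetherian M hM
  set F : Module.End R B := f with hF
  set F' : Module.End R B := f' with hF'
  have hpow : ∀ (g : Module.End R B), (∀ b ∈ M, g b ∈ M) →
      ∀ n, ∀ b ∈ M, (g ^ n) b ∈ M := by
    intro g hg n
    induction n with
    | zero => simpa using fun b hb => hb
    | succ n ih =>
      intro b hb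
      rw [pow_succ, Module.End.mul_apply]
      exact ih _ (hg b hb)
  have hcancel : ∀ n b, (F ^ n) ((F' ^ n) b) = b := by
    intro n
    induction n with
    | zero => simp
    | succ n ih =>
      intro b
      rw [pow_succ F, pow_succ' F', Module.End.mul_apply, Module.End.mul_apply, hff']
      exact ih b
  let V : ℕ → Submodule R M := fun n =>
    (M ⊓ Submodule.comap (F ^ n : B →ₗ[R] B) J).comap M.subtype
  have hVmono : Monotone V := by
    apply monotone_nat_of_le_succ
    intro n m hm
    simp only [V, Submodule.mem_comap, Submodule.mem_inf] at hm ⊢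
    refine ⟨hm.1, ?_⟩
    rw [pow_succ', Module.End.mul_apply]
    exact hJf _ hm.2
  obtain ⟨N, hN⟩ := monotone_stabilizes_iff_noetherian.mpr inferInstance ⟨V, hVmono⟩
  have key : ∀ b (hb : b ∈ M), (F ^ (N + 1)) b ∈ J → (F ^ N) b ∈ J := by
    intro b hb h1
    have h2 : (⟨b, hb⟩ : M) ∈ V (N + 1) := by
      simp only [V, Submodule.mem_comap, Submodule.mem_inf]
      exact ⟨hb, h1⟩
    have hVN : V N = V (N + 1) := hN (N + 1) (Nat.le_succ N)
    rw [← hVN] at h2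
    simp only [V, Submodule.mem_comap, Submodule.mem_inf] at h2
    exact h2.2
  have hu : (F' ^ (N + 1)) b₀ ∈ M := hpow F' hMf' _ _ hbM
  have h1 : (F ^ (N + 1)) ((F' ^ (N + 1)) b₀) ∈ J := by rw [hcancel]; exact hbJ
  have h2 := key _ hu h1
  rw [pow_succ F', Module.End.mul_apply, hcancel] at h2
  exact h2

/-- Every element of a coalgebra over a field lies in a subspace spanned by a
finite set `G` such that `comul (span G) ⊆ H ⊗ span G`. -/
theorem aux_exists_subcomodule {k H : Type*} [Field k] [AddCommGroup H] [Module k H]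
    [Coalgebra k H] (x : H) :
    ∃ G : Finset H, x ∈ Submodule.span k (G : Set H) ∧
      ∀ c ∈ Submodule.span k (G : Set H),
        Coalgebra.comul (R := k) c ∈
          LinearMap.range (LinearMap.lTensor H (Submodule.span k (G : Set H)).subtype) := by
  classical
  obtain ⟨s, hs⟩ := TensorProduct.exists_finset (R := k) (Coalgebra.comul (R := k) x)
  set β := Module.Basis.ofVectorSpace k H with hβ
  set S₀ : Finset (Module.Basis.ofVectorSpaceIndex k H) :=
    s.biUnion (fun p => (β.repr p.1).support) with hS₀
  set c : Module.Basis.ofVectorSpaceIndex k H → H :=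
    fun j => ∑ p ∈ s, β.repr p.1 j • p.2 with hc
  have key1 : Coalgebra.comul (R := k) x = ∑ j ∈ S₀, β j ⊗ₜ[k] c j := by
    rw [hs]
    have hp1 : ∀ p ∈ s, (p : H × H).1 = ∑ j ∈ S₀, β.repr p.1 j • β j := by
      intro p hp
      have hsub : (β.repr p.1).support ⊆ S₀ :=
        fun j hj => Finset.mem_biUnion.mpr ⟨p, hp, hj⟩
      conv_lhs => rw [← β.linearCombination_repr p.1]
      rw [Finsupp.linearCombination_apply,
        Finsupp.sum_of_support_subset _ hsub _ (fun j _ => zero_smul k (β j))]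
    calc ∑ p ∈ s, p.1 ⊗ₜ[k] p.2
        = ∑ p ∈ s, ∑ j ∈ S₀, β.repr p.1 j • (β j ⊗ₜ[k] p.2) := by
          refine Finset.sum_congr rfl fun p hp => ?_
          conv_lhs => rw [hp1 p hp]
          rw [TensorProduct.sum_tmul]
          exact Finset.sum_congr rfl fun j _ => by rw [TensorProduct.smul_tmul']
      _ = ∑ j ∈ S₀, β j ⊗ₜ[k] c j := by
          rw [Finset.sum_comm]
          refine Finset.sum_congr rfl fun j _ => ?_
          rw [hc, TensorProduct.tmul_sum]
          exact Finset.sum_congr rfl fun p _ => by rw [TensorProduct.tmul_smul]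
  refine ⟨insert x (S₀.image c), Submodule.subset_span (Finset.mem_insert_self x _), ?_⟩
  set G : Finset H := insert x (S₀.image c) with hG
  set C : Submodule k H := Submodule.span k (G : Set H) with hC
  set Q : Submodule k (H ⊗[k] H) := LinearMap.range (LinearMap.lTensor H C.subtype) with hQ
  have hQmem : ∀ (h' : H) {c' : H}, c' ∈ C → h' ⊗ₜ[k] c' ∈ Q := by
    intro h' c' hc'
    exact ⟨h' ⊗ₜ[k] (⟨c', hc'⟩ : C), by simp⟩
  have hcj : ∀ j ∈ S₀, c j ∈ C :=
    fun j hj => Submodule.subset_span (Finset.mem_insert_of_mem (Finset.mem_image_of_mem c hj))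
  suffices hgen : ∀ g ∈ G, Coalgebra.comul (R := k) g ∈ Q by
    intro c' hc'
    have : C ≤ Submodule.comap (CoalgebraStruct.comul (R := k) (A := H)) Q :=
      Submodule.span_le.mpr fun g hg => hgen g hg
    exact this hc'
  intro g hg
  rcases Finset.mem_insert.mp hg with rfl | hg
  · rw [key1]
    exact Submodule.sum_mem _ fun j hj => hQmem _ (hcj j hj)
  · obtain ⟨j₀, hj₀, rfl⟩ := Finset.mem_image.mp hg
    have hco := Coalgebra.coassoc_apply (R := k) x
    set F : H ⊗[k] (H ⊗[k] H) →ₗ[k] H ⊗[k] H :=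
      (TensorProduct.lid k (H ⊗[k] H)).toLinearMap ∘ₗ
        LinearMap.rTensor (H ⊗[k] H) (β.coord j₀) with hFdef
    have h2 : F ((LinearMap.lTensor H (CoalgebraStruct.comul (R := k)))
          (Coalgebra.comul (R := k) x))
        = Coalgebra.comul (R := k) (c j₀) := by
      rw [key1, map_sum, map_sum]
      rw [Finset.sum_eq_single_of_mem j₀ hj₀]
      · simp [F, Module.Basis.coord_apply, Module.Basis.repr_self]
      · intro j hj hne
        simp [F, Module.Basis.coord_apply, Module.Basis.repr_self, Finsupp.single_eq_of_ne' hne]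
    have h3 : F ((TensorProduct.assoc k H H H)
        ((LinearMap.rTensor H (CoalgebraStruct.comul (R := k)))
          (Coalgebra.comul (R := k) x))) ∈ Q := by
      rw [key1, map_sum, map_sum, map_sum]
      refine Submodule.sum_mem _ fun j hj => ?_
      have hrj := (Coalgebra.Repr.arbitrary k (β j)).eq
      rw [LinearMap.rTensor_tmul, ← hrj, TensorProduct.sum_tmul, map_sum, map_sum]
      refine Submodule.sum_mem _ fun l _ => ?_
      rw [TensorProduct.assoc_tmul]
      simp only [F, LinearMap.coe_comp, Function.comp_apply, LinearMap.rTensor_tmul,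
        LinearEquiv.coe_coe, TensorProduct.lid_tmul]
      exact Q.smul_mem _ (hQmem _ (hcj j hj))
    rw [← h2, ← hco]
    exact h3

end Aux

set_option maxHeartbeats 1600000 in
set_option synthInstance.maxHeartbeats 400000 in
/-- In a commutative Hopf algebra, every biideal (an ideal `I` with
`Δ(I) ⊆ I ⊗ H + H ⊗ I` and `ε(I) = 0`) is automatically a Hopf ideal:
`S(I) ⊆ I`. -/
theorem biideal_is_hopf_ideal {k H : Type*} [Field k] [CommRing H]
    [HopfAlgebra k H] (I : Ideal H)
    (hΔ : ∀ x ∈ I, Coalgebra.comul (R := k) x ∈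
        LinearMap.range (TensorProduct.map (I.restrictScalars k).subtype
            (LinearMap.id (R := k) (M := H))) ⊔
        LinearMap.range (TensorProduct.map (LinearMap.id (R := k) (M := H))
            (I.restrictScalars k).subtype))
    (hε : ∀ x ∈ I, Coalgebra.counit (R := k) x = 0) :
    ∀ x ∈ I, HopfAlgebra.antipode (R := k) x ∈ I := by
  classical
  intro x hxI
  set A := H ⧸ I with hA
  set π' : H →ₗ[k] A := (Ideal.Quotient.mkₐ k I).toLinearMap with hπ'
  set Sa : H →ₗ[k] H := HopfAlgebra.antipode (R := k) with hSa
  set θ : H →ₗ[k] A ⊗[k] H :=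
    (TensorProduct.map π' LinearMap.id) ∘ₗ (CoalgebraStruct.comul (R := k) (A := H)) with hθ
  set θ' : H →ₗ[k] A ⊗[k] H :=
    (TensorProduct.map (π' ∘ₗ Sa) LinearMap.id) ∘ₗ
      (CoalgebraStruct.comul (R := k) (A := H)) with hθ'
  set ψ : A ⊗[k] H →ₗ[A] A ⊗[k] H := θ.liftBaseChange A with hψ
  set ψ' : A ⊗[k] H →ₗ[A] A ⊗[k] H := θ'.liftBaseChange A with hψ'
  -- the key Sweedler computation : ψ ∘ ψ' = id on `1 ⊗ h`
  have hψθ' : ∀ h : H, ψ (θ' h) = (1 : A) ⊗ₜ[k] h := by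
    intro h
    set r := Coalgebra.Repr.arbitrary k h with hr
    set a₁ : (i : r.ι) → Coalgebra.Repr k (r.left i) (H × H) :=
      fun i => Coalgebra.Repr.arbitrary k (r.left i) with ha₁
    set r₂ : (i : r.ι) → Coalgebra.Repr k (r.right i) (H × H) :=
      fun i => Coalgebra.Repr.arbitrary k (r.right i) with hr₂
    have step1 : ψ (θ' h) = ∑ i ∈ r.index, ∑ l ∈ (r₂ i).index,
        (π' (Sa (r.left i) * (r₂ i).left l)) ⊗ₜ[k] ((r₂ i).right l) := by
      rw [hθ', LinearMap.comp_apply, ← r.eq, map_sum, map_sum]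
      refine Finset.sum_congr rfl fun i _ => ?_
      rw [TensorProduct.map_tmul, LinearMap.liftBaseChange_tmul, hθ]
      simp only [LinearMap.comp_apply, LinearMap.id_coe, id_eq]
      rw [← (r₂ i).eq, map_sum, Finset.smul_sum]
      refine Finset.sum_congr rfl fun l _ => ?_
      rw [TensorProduct.map_tmul, TensorProduct.smul_tmul', smul_eq_mul]
      all_goals simp [hπ', ← map_mul]
    have key : ∑ i ∈ r.index, ∑ l ∈ (r₂ i).index,
        (Sa (r.left i) * (r₂ i).left l) ⊗ₜ[k] ((r₂ i).right l) = (1 : H) ⊗ₜ[k] h := by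
      have hkey := Coalgebra.sum_tmul_tmul_eq r a₁ r₂
      set Ξ : H ⊗[k] (H ⊗[k] H) →ₗ[k] H ⊗[k] H :=
        (LinearMap.rTensor H ((LinearMap.mul' k H) ∘ₗ (LinearMap.rTensor H Sa))) ∘ₗ
          (TensorProduct.assoc k H H H).symm.toLinearMap with hΞ
      have hΞtmul : ∀ (u v w : H), Ξ (u ⊗ₜ[k] (v ⊗ₜ[k] w)) = (Sa u * v) ⊗ₜ[k] w := by
        intro u v w
        simp [Ξ, TensorProduct.assoc_symm_tmul]
      have hkey2 := congrArg Ξ hkey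
      rw [map_sum, map_sum] at hkey2
      have hlhs : ∑ i ∈ r.index, Ξ (∑ j ∈ (a₁ i).index,
          (a₁ i).left j ⊗ₜ[k] ((a₁ i).right j ⊗ₜ[k] r.right i)) = (1 : H) ⊗ₜ[k] h := by
        have hsum : ∀ i ∈ r.index, Ξ (∑ j ∈ (a₁ i).index,
            (a₁ i).left j ⊗ₜ[k] ((a₁ i).right j ⊗ₜ[k] r.right i)) =
            (algebraMap k H (Coalgebra.counit (R := k) (r.left i))) ⊗ₜ[k] r.right i := by
          intro i _
          rw [map_sum]
          have : ∀ j ∈ (a₁ i).index, Ξ ((a₁ i).left j ⊗ₜ[k] ((a₁ i).right j ⊗ₜ[k] r.right i))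
              = (Sa ((a₁ i).left j) * (a₁ i).right j) ⊗ₜ[k] r.right i :=
            fun j _ => hΞtmul _ _ _
          rw [Finset.sum_congr rfl this, ← TensorProduct.sum_tmul]
          congr 1
          exact HopfAlgebra.sum_antipode_mul_eq_algebraMap_counit (a₁ i)
        rw [Finset.sum_congr rfl hsum]
        have hx2 : ∑ i ∈ r.index, Coalgebra.counit (R := k) (r.left i) • r.right i = h := by
          have h5 := congrArg (TensorProduct.lid k H) (Coalgebra.sum_counit_tmul_eq r)
          rw [map_sum] at h5
          simpa using h5
        calc ∑ i ∈ r.index,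
              (algebraMap k H (Coalgebra.counit (R := k) (r.left i))) ⊗ₜ[k] r.right i
            = ∑ i ∈ r.index, (1 : H) ⊗ₜ[k]
                (Coalgebra.counit (R := k) (r.left i) • r.right i) := by
              refine Finset.sum_congr rfl fun i _ => ?_
              rw [Algebra.algebraMap_eq_smul_one, TensorProduct.smul_tmul]
          _ = (1 : H) ⊗ₜ[k] h := by rw [← TensorProduct.tmul_sum, hx2]
      have hrhs : ∀ i ∈ r.index, Ξ (∑ j ∈ (r₂ i).index,
          r.left i ⊗ₜ[k] ((r₂ i).left j ⊗ₜ[k] (r₂ i).right j)) =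
          ∑ j ∈ (r₂ i).index, (Sa (r.left i) * (r₂ i).left j) ⊗ₜ[k] (r₂ i).right j := by
        intro i _
        rw [map_sum]
        exact Finset.sum_congr rfl fun j _ => hΞtmul _ _ _
      rw [hlhs, Finset.sum_congr rfl hrhs] at hkey2
      exact hkey2.symm
    rw [step1]
    have := congrArg (TensorProduct.map π' (LinearMap.id (R := k) (M := H))) key
    rw [map_sum] at this
    simp only [map_sum, TensorProduct.map_tmul, LinearMap.id_coe, id_eq] at this
    rw [this]
    all_goals simp [hπ']
  have hcomp : ∀ b : A ⊗[k] H, ψ (ψ' b) = b := by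
    intro b
    induction b using TensorProduct.induction_on with
    | zero => simp
    | tmul a h =>
      rw [hψ', LinearMap.liftBaseChange_tmul, map_smul, hψθ', TensorProduct.smul_tmul',
        smul_eq_mul, mul_one]
    | add u v hu hv => rw [map_add, map_add, hu, hv]
  -- the ideal J = A ⊗ I
  set J : Submodule A (A ⊗[k] H) :=
    Submodule.span A ((fun y => (1 : A) ⊗ₜ[k] y) '' (I : Set H)) with hJ
  have hJψ : ∀ b ∈ J, ψ b ∈ J := by
    have : J ≤ Submodule.comap ψ J := by
      rw [hJ, Submodule.span_le]
      rintro _ ⟨y, hy, rfl⟩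
      show ψ ((1 : A) ⊗ₜ[k] y) ∈ J
      rw [hψ, LinearMap.liftBaseChange_tmul, one_smul, hθ, LinearMap.comp_apply]
      have hu0 : ∀ w : (↥(I.restrictScalars k)) ⊗[k] H, (TensorProduct.map π' LinearMap.id)
          ((TensorProduct.map (I.restrictScalars k).subtype
            (LinearMap.id (R := k) (M := H))) w) = 0 := by
        intro w
        induction w using TensorProduct.induction_on with
        | zero => simp
        | tmul y' h' =>
          rw [TensorProduct.map_tmul, TensorProduct.map_tmul]
          have : π' ((I.restrictScalars k).subtype y') = 0 := by
            simp only [hπ', AlgHom.toLinearMap_apply, Ideal.Quotient.mkₐ_eq_mk,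
              Submodule.coe_subtype]
            exact Ideal.Quotient.eq_zero_iff_mem.mpr y'.2
          rw [this, TensorProduct.zero_tmul]
        | add u1 u2 h1 h2 => rw [map_add, map_add, h1, h2, add_zero]
      have hvJ : ∀ w : H ⊗[k] (↥(I.restrictScalars k)), (TensorProduct.map π' LinearMap.id)
          ((TensorProduct.map (LinearMap.id (R := k) (M := H))
            (I.restrictScalars k).subtype) w) ∈ J := by
        intro w
        induction w using TensorProduct.induction_on with
        | zero => simp
        | tmul h' y' =>
          have hmem : ((1 : A) ⊗ₜ[k] ((y' : H))) ∈ J :=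
            Submodule.subset_span ⟨(y' : H), y'.2, rfl⟩
          have h2 := J.smul_mem (π' h') hmem
          rw [TensorProduct.smul_tmul', smul_eq_mul, mul_one] at h2
          simpa using h2
        | add u1 u2 h1 h2 =>
          rw [map_add, map_add]
          exact J.add_mem h1 h2
      obtain ⟨u, hu, v, hv, huv⟩ := Submodule.mem_sup.mp (hΔ y hy)
      rw [← huv, map_add]
      obtain ⟨wu, rfl⟩ := hu
      obtain ⟨wv, rfl⟩ := hv
      rw [hu0 wu, zero_add]
      exact hvJ wv
    exact fun b hb => this hb
  -- the finite-dimensional subcomodule containing x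
  obtain ⟨G, hxC, hstab⟩ := aux_exists_subcomodule (k := k) x
  set C : Submodule k H := Submodule.span k (G : Set H) with hC
  have hrep : ∀ g : H, ∃ tg : Finset (H × C), g ∈ G →
      Coalgebra.comul (R := k) g = ∑ p ∈ tg, p.1 ⊗ₜ[k] (p.2 : H) := by
    intro g
    by_cases hg : g ∈ G
    · obtain ⟨w, hw⟩ := hstab g (Submodule.subset_span hg)
      obtain ⟨tw, htw⟩ := TensorProduct.exists_finset (R := k) w
      refine ⟨tw, fun _ => ?_⟩
      rw [← hw, htw, map_sum]
      exact Finset.sum_congr rfl fun p _ => by rw [LinearMap.lTensor_tmul]; rfl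
    · exact ⟨∅, fun h => absurd h hg⟩
  choose t ht using hrep
  set T : Finset H := G.biUnion (fun g => (t g).image Prod.fst) with hT
  have hp1T : ∀ {g}, g ∈ G → ∀ {p : H × C}, p ∈ t g → p.1 ∈ T := by
    intro g hg p hp
    exact Finset.mem_biUnion.mpr ⟨g, hg, Finset.mem_image_of_mem Prod.fst hp⟩
  -- the Noetherian coefficient ring
  set P := MvPolynomial (Bool × {y : H // y ∈ T}) k with hP
  set φ : P →ₐ[k] A := MvPolynomial.aeval
    (fun q : Bool × {y : H // y ∈ T} =>
      if q.1 then Ideal.Quotient.mk I (q.2 : H)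
      else Ideal.Quotient.mk I (Sa (q.2 : H))) with hφ
  letI : Module P (A ⊗[k] H) := Module.compHom _ φ.toRingHom
  have hPsmul : ∀ (p : P) (b : A ⊗[k] H), p • b = φ p • b := fun _ _ => rfl
  have hksmul : ∀ (a : k) (b : A ⊗[k] H), (MvPolynomial.C a : P) • b = a • b := by
    intro a b
    rw [hPsmul]
    have h1 : φ (MvPolynomial.C a) = algebraMap k A a := by
      rw [hφ]; exact MvPolynomial.aeval_C _ a
    rw [h1, algebraMap_smul]
  -- the module M
  set MP : Submodule P (A ⊗[k] H) :=
    Submodule.span P ((fun c => (1 : A) ⊗ₜ[k] c) '' (G : Set H)) with hMP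
  have h1c : ∀ c' ∈ C, (1 : A) ⊗ₜ[k] c' ∈ MP := by
    intro c' hc'
    induction hc' using Submodule.span_induction with
    | mem g hg => exact Submodule.subset_span ⟨g, hg, rfl⟩
    | zero => rw [TensorProduct.tmul_zero]; exact MP.zero_mem
    | add u v hu hv hu' hv' => rw [TensorProduct.tmul_add]; exact MP.add_mem hu' hv'
    | smul a u hu hu' =>
      rw [TensorProduct.tmul_smul, ← hksmul]
      exact MP.smul_mem _ hu'
  -- scalars coming from T act on MP
  set genA : Set A := ((fun y => Ideal.Quotient.mk I y) '' (T : Set H)) ∪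
      ((fun y => Ideal.Quotient.mk I (Sa y)) '' (T : Set H)) with hgenA
  have hW : ∀ a ∈ Submodule.span k genA, ∀ b ∈ MP, a • b ∈ MP := by
    intro a ha
    induction ha using Submodule.span_induction with
    | mem a hmem =>
      intro b hb
      rcases hmem with ⟨y, hy, rfl⟩ | ⟨y, hy, rfl⟩
      · have : Ideal.Quotient.mk I y = φ (MvPolynomial.X (true, ⟨y, hy⟩)) := by
          rw [hφ, MvPolynomial.aeval_X]; simp
        show Ideal.Quotient.mk I y • b ∈ MP
        rw [this, ← hPsmul]
        exact MP.smul_mem _ hb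
      · have : Ideal.Quotient.mk I (Sa y) = φ (MvPolynomial.X (false, ⟨y, hy⟩)) := by
          rw [hφ, MvPolynomial.aeval_X]; simp
        show Ideal.Quotient.mk I (Sa y) • b ∈ MP
        rw [this, ← hPsmul]
        exact MP.smul_mem _ hb
    | zero => intro b hb; rw [zero_smul]; exact MP.zero_mem
    | add u v hu hv hu' hv' =>
      intro b hb
      rw [add_smul]
      exact MP.add_mem (hu' b hb) (hv' b hb)
    | smul a u hu hu' =>
      intro b hb
      rw [smul_assoc, ← hksmul]
      exact MP.smul_mem _ (hu' b hb)
  have hπT : ∀ y ∈ T, (Ideal.Quotient.mk I y) ∈ Submodule.span k genA :=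
    fun y hy => Submodule.subset_span (Or.inl ⟨y, hy, rfl⟩)
  have hπST : ∀ y ∈ T, (Ideal.Quotient.mk I (Sa y)) ∈ Submodule.span k genA :=
    fun y hy => Submodule.subset_span (Or.inr ⟨y, hy, rfl⟩)
  -- stability of MP under ψ and ψ'
  have hMψ : ∀ b ∈ MP, ψ b ∈ MP := by
    have hgen : ∀ g ∈ G, ψ ((1 : A) ⊗ₜ[k] g) ∈ MP := by
      intro g hg
      rw [hψ, LinearMap.liftBaseChange_tmul, one_smul, hθ, LinearMap.comp_apply, ht g hg,
        map_sum]
      refine Submodule.sum_mem _ fun p hp => ?_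
      have hmem := hW _ (hπT _ (hp1T hg hp)) _ (h1c _ p.2.2)
      rw [TensorProduct.smul_tmul', smul_eq_mul, mul_one] at hmem
      simpa [hπ'] using hmem
    intro b hb
    induction hb using Submodule.span_induction with
    | mem b hmem =>
      obtain ⟨g, hg, rfl⟩ := hmem
      exact hgen g hg
    | zero => rw [map_zero]; exact MP.zero_mem
    | add u v hu hv hu' hv' => rw [map_add]; exact MP.add_mem hu' hv'
    | smul p u hu hu' =>
      rw [hPsmul, map_smul, ← hPsmul]
      exact MP.smul_mem _ hu'
  have hMψ' : ∀ b ∈ MP, ψ' b ∈ MP := by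
    have hgen : ∀ g ∈ G, ψ' ((1 : A) ⊗ₜ[k] g) ∈ MP := by
      intro g hg
      rw [hψ', LinearMap.liftBaseChange_tmul, one_smul, hθ', LinearMap.comp_apply, ht g hg,
        map_sum]
      refine Submodule.sum_mem _ fun p hp => ?_
      have hmem := hW _ (hπST _ (hp1T hg hp)) _ (h1c _ p.2.2)
      rw [TensorProduct.smul_tmul', smul_eq_mul, mul_one] at hmem
      simpa [hπ'] using hmem
    intro b hb
    induction hb using Submodule.span_induction with
    | mem b hmem =>
      obtain ⟨g, hg, rfl⟩ := hmem
      exact hgen g hg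
    | zero => rw [map_zero]; exact MP.zero_mem
    | add u v hu hv hu' hv' => rw [map_add]; exact MP.add_mem hu' hv'
    | smul p u hu hu' =>
      rw [hPsmul, map_smul, ← hPsmul]
      exact MP.smul_mem _ hu'
  -- P-linear versions of ψ, ψ' and J
  set ψP : A ⊗[k] H →ₗ[P] A ⊗[k] H :=
    { toFun := ψ, map_add' := fun a b => map_add ψ a b,
      map_smul' := fun p b => by
        simp only [RingHom.id_apply]
        rw [hPsmul, map_smul, hPsmul] } with hψP
  set ψ'P : A ⊗[k] H →ₗ[P] A ⊗[k] H :=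
    { toFun := ψ', map_add' := fun a b => map_add ψ' a b,
      map_smul' := fun p b => by
        simp only [RingHom.id_apply]
        rw [hPsmul, map_smul, hPsmul] } with hψ'P
  set JP : Submodule P (A ⊗[k] H) :=
    { carrier := (J : Set (A ⊗[k] H)),
      add_mem' := fun h1 h2 => J.add_mem h1 h2,
      zero_mem' := J.zero_mem,
      smul_mem' := fun p b hb => by
        show p • b ∈ J
        rw [hPsmul]
        exact J.smul_mem _ hb } with hJP
  have hJPmem : ∀ b : A ⊗[k] H, b ∈ JP ↔ b ∈ J := fun b => Iff.rfl
  have hMPfg : MP.FG := Submodule.fg_span ((G.finite_toSet).image _)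
  have hfinal : ψ'P ((1 : A) ⊗ₜ[k] x) ∈ JP := by
    refine aux_noetherian_step ψP ψ'P (fun b => hcomp b) JP MP hMPfg ?_ ?_ _ ?_ ?_
    · exact fun b hb => hJψ b hb
    · exact fun b hb => hMψ' b hb
    · exact h1c x hxC
    · exact Submodule.subset_span ⟨x, hxI, rfl⟩
  -- extract the conclusion using the counit
  have hθ'J : θ' x ∈ J := by
    have : ψ'P ((1 : A) ⊗ₜ[k] x) = θ' x := by
      show ψ' ((1 : A) ⊗ₜ[k] x) = θ' x
      rw [hψ', LinearMap.liftBaseChange_tmul, one_smul]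
    rw [← this]
    exact (hJPmem _).mp hfinal
  set ρ : A ⊗[k] H →ₗ[A] A :=
    ((Algebra.linearMap k A) ∘ₗ (CoalgebraStruct.counit (R := k) (A := H))).liftBaseChange A
    with hρ
  have hρJ : ∀ b ∈ J, ρ b = 0 := by
    have : J ≤ LinearMap.ker ρ := by
      rw [hJ, Submodule.span_le]
      rintro _ ⟨y, hy, rfl⟩
      simp only [SetLike.mem_coe, LinearMap.mem_ker]
      rw [hρ, LinearMap.liftBaseChange_tmul, one_smul, LinearMap.comp_apply]
      rw [hε y hy]
      simp
    exact fun b hb => this hb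
  have hρθ' : ρ (θ' x) = π' (Sa x) := by
    set r := Coalgebra.Repr.arbitrary k x with hr
    have hx2 : ∑ i ∈ r.index, Coalgebra.counit (R := k) (r.right i) • r.left i = x := by
      have h5 := congrArg (TensorProduct.rid k H) (Coalgebra.sum_tmul_counit_eq r)
      rw [map_sum] at h5
      simpa using h5
    rw [hθ', LinearMap.comp_apply, ← r.eq, map_sum, map_sum]
    have : ∀ i ∈ r.index, ρ ((TensorProduct.map (π' ∘ₗ Sa) LinearMap.id)
        (r.left i ⊗ₜ[k] r.right i))
        = π' (Sa (Coalgebra.counit (R := k) (r.right i) • r.left i)) := by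
      intro i _
      rw [TensorProduct.map_tmul, hρ, LinearMap.liftBaseChange_tmul]
      simp only [LinearMap.comp_apply, Algebra.linearMap_apply, map_smul, LinearMap.id_coe, id_eq]
      rw [smul_eq_mul, mul_comm, ← Algebra.smul_def]
    rw [Finset.sum_congr rfl this, ← map_sum, ← map_sum, hx2]
  have : Ideal.Quotient.mk I (Sa x) = 0 := by
    have h9 : π' (Sa x) = 0 := by
      rw [← hρθ']
      exact hρJ _ hθ'J
    simpa [hπ'] using h9
  exact Ideal.Quotient.eq_zero_iff_mem.mp this
end

section
/- Let H be a graded connected commutative bialgebra over \mathbb{Q}, B_+ a degree-one Hochschild 1-cocycle, and X = 1 + g B_+(X Q^{2}) the unique solution of the Dyson–Schwinger equation with Q = X (toy case Q = X, i.e. X = 1 + g B_+(X^3)). Then the coefficients X_l generate a Hopf subalgebra: \Delta(X_l) is a sum of terms P \otimes X_j with j \le l and P a polynomial in X_1, ..., X_l. -/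
open TensorProduct

/-- The coefficientwise extension of a linear map `B : H → H` to `H[[g]]`. -/
noncomputable def seriesExt {H : Type*} [CommRing H] [Algebra ℚ H] (B : H →ₗ[ℚ] H)
    (f : PowerSeries H) : PowerSeries H :=
  PowerSeries.mk fun n => B (PowerSeries.coeff (R := H) n f)

lemma ds_two_sum {M : Type*} [AddCommMonoid M] (n : ℕ) (g : ℕ → ℕ → M)
    (hg : ∀ i j, n < i + j → g i j = 0) :
    ∑ i ∈ Finset.range (n+1), ∑ j ∈ Finset.range (n+1), g i j
      = ∑ m ∈ Finset.range (n+1), ∑ i ∈ Finset.range (m+1), g i (m - i) := by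
  rw [← Finset.sum_product', Finset.sum_sigma']
  rw [← Finset.sum_filter_of_ne (p := fun p : ℕ × ℕ => p.1 + p.2 ≤ n)
    (fun x _ hx => by by_contra h; exact hx (hg x.1 x.2 (not_le.mp h)))]
  apply Finset.sum_nbij' (i := fun p => ⟨p.1 + p.2, p.1⟩) (j := fun q => (q.2, q.1 - q.2))
  · rintro ⟨i, j⟩ h
    simp only [Finset.mem_filter, Finset.mem_product, Finset.mem_range] at h
    simp only [Finset.mem_sigma, Finset.mem_range]
    omega
  · rintro ⟨m, i⟩ h
    simp only [Finset.mem_sigma, Finset.mem_range] at h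
    simp only [Finset.mem_filter, Finset.mem_product, Finset.mem_range]
    omega
  · rintro ⟨i, j⟩ h
    simp only [Finset.mem_filter, Finset.mem_product, Finset.mem_range] at h
    show (i, i + j - i) = (i, j)
    simp only [Prod.mk.injEq]
    exact ⟨trivial, by omega⟩
  · rintro ⟨m, i⟩ h
    simp only [Finset.mem_sigma, Finset.mem_range] at h
    simp only [Sigma.mk.inj_iff]
    constructor
    · omega
    · simp
  · rintro ⟨i, j⟩ h
    simp only [Finset.mem_filter, Finset.mem_product, Finset.mem_range] at h
    show g i j = g i (i + j - i)
    congr 1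
    omega

lemma ds_triple_sum {M : Type*} [AddCommMonoid M] (n : ℕ) (f : ℕ → ℕ → ℕ → M)
    (hf : ∀ i j k, n < i + j + k → f i j k = 0) :
    ∑ i ∈ Finset.range (n+1), ∑ j ∈ Finset.range (n+1), ∑ k ∈ Finset.range (n+1), f i j k
      = ∑ m ∈ Finset.range (n+1), ∑ i ∈ Finset.range (m+1), ∑ j ∈ Finset.range (m-i+1),
          f i j (m - i - j) := by
  have step1 : ∀ i ∈ Finset.range (n+1),
      ∑ j ∈ Finset.range (n+1), ∑ k ∈ Finset.range (n+1), f i j k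
        = ∑ p ∈ Finset.range (n+1), ∑ j ∈ Finset.range (p+1), f i j (p - j) := by
    intro i _
    exact ds_two_sum n (fun j k => f i j k) (fun j k h => hf i j k (by omega))
  rw [Finset.sum_congr rfl step1]
  exact ds_two_sum n (fun i p => ∑ j ∈ Finset.range (p+1), f i j (p - j))
    (fun i p h => Finset.sum_eq_zero fun j hj => hf i j (p - j)
      (by simp only [Finset.mem_range] at hj; omega))

open PowerSeries in
theorem ds_key {H : Type*} [CommRing H] [Bialgebra ℚ H]
    (B : H →ₗ[ℚ] H)
    (hBcocycle : ∀ x : H, Coalgebra.comul (R := ℚ) (B x)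
        = (B x) ⊗ₜ[ℚ] 1 + (TensorProduct.map LinearMap.id B) (Coalgebra.comul (R := ℚ) x))
    (X : PowerSeries H)
    (hX0 : PowerSeries.constantCoeff (R := H) X = 1)
    (hXeq : X = 1 + PowerSeries.X * seriesExt B (X ^ 3)) :
    ∀ n : ℕ, Coalgebra.comul (R := ℚ) (PowerSeries.coeff (R := H) n X)
      = ∑ m ∈ Finset.range (n+1),
          (PowerSeries.coeff (R := H) (n - m) (X ^ (2*m+1))) ⊗ₜ[ℚ] (PowerSeries.coeff (R := H) m X) := by
  have hXsucc : ∀ m : ℕ, coeff (R := H) (m+1) X = B (coeff (R := H) m (X^3)) := by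
    intro m
    conv_lhs => rw [hXeq]
    rw [map_add, PowerSeries.coeff_one, if_neg (Nat.succ_ne_zero m),
      PowerSeries.coeff_succ_X_mul, seriesExt, PowerSeries.coeff_mk, zero_add]
  have hX0' : coeff (R := H) 0 X = 1 := by
    rw [PowerSeries.coeff_zero_eq_constantCoeff, hX0]
  -- the comultiplication as a ring hom, and its coefficientwise extension
  set Δr : H →+* H ⊗[ℚ] H := (Bialgebra.comulAlgHom ℚ H).toRingHom with hΔr
  have hΔ : ∀ h : H, Δr h = Coalgebra.comul (R := ℚ) h := fun h => rfl
  set L : H →+* H ⊗[ℚ] H := Algebra.TensorProduct.includeLeftRingHom with hL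
  have hLa : ∀ h : H, L h = h ⊗ₜ[ℚ] 1 := fun h => rfl
  set T : PowerSeries (H ⊗[ℚ] H) := PowerSeries.map Δr X with hT
  set U : PowerSeries (H ⊗[ℚ] H) := PowerSeries.map L X with hU
  have hTc : ∀ k : ℕ, coeff k T = Coalgebra.comul (R := ℚ) (coeff (R := H) k X) := by
    intro k; rw [hT, PowerSeries.coeff_map, hΔ]
  intro n
  induction n using Nat.strong_induction_on with
  | _ n ih =>
    match n with
    | 0 =>
      rw [hX0', Finset.sum_range_one, pow_one, Nat.sub_zero, hX0']
      rw [Bialgebra.comul_one, Algebra.TensorProduct.one_def]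
    | Nat.succ n =>
      -- the partial sum Y
      set Y : PowerSeries (H ⊗[ℚ] H) :=
        ∑ m ∈ Finset.range (n+1), PowerSeries.X^m * U^(2*m+1)
          * PowerSeries.C ((1:H) ⊗ₜ[ℚ] coeff (R := H) m X) with hY
      have hterm : ∀ (s e : ℕ) (c : H) (k : ℕ),
          coeff k (PowerSeries.X^s * U^e * PowerSeries.C ((1:H) ⊗ₜ[ℚ] c))
            = if s ≤ k then (coeff (R := H) (k-s) (X^e)) ⊗ₜ[ℚ] c else 0 := by
        intro s e c k
        rw [mul_assoc, PowerSeries.coeff_X_pow_mul']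
        split_ifs with h
        · rw [PowerSeries.coeff_mul_C, hU, ← map_pow, PowerSeries.coeff_map, hLa,
            Algebra.TensorProduct.tmul_mul_tmul, mul_one, one_mul]
        · rfl
      have hYc : ∀ k : ℕ, k ≤ n → coeff k Y
          = ∑ m ∈ Finset.range (k+1), (coeff (R := H) (k-m) (X^(2*m+1))) ⊗ₜ[ℚ] (coeff (R := H) m X) := by
        intro k hk
        rw [hY, map_sum]
        rw [Finset.sum_congr rfl fun m _ => hterm m (2*m+1) (coeff (R := H) m X) k]
        rw [← Finset.sum_subset (Finset.range_subset_range.2 (by omega : k+1 ≤ n+1))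
          (fun m _ hm => if_neg (by simp only [Finset.mem_range] at *; omega))]
        exact Finset.sum_congr rfl fun m hm =>
          if_pos (by simp only [Finset.mem_range] at hm; omega)
      have hdvd : (PowerSeries.X : PowerSeries (H ⊗[ℚ] H))^(n+1) ∣ T - Y := by
        rw [PowerSeries.X_pow_dvd_iff]
        intro k hk
        rw [map_sub, hTc, ih k hk, hYc k (by omega), sub_self]
      have hdvd3 : (PowerSeries.X : PowerSeries (H ⊗[ℚ] H))^(n+1) ∣ T^3 - Y^3 := by
        have h3 : T^3 - Y^3 = (T - Y) * (T^2 + T*Y + Y^2) := by ring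
        rw [h3]; exact hdvd.mul_right _
      have hcoeffT3 : coeff n (T^3) = coeff n (Y^3) := by
        have := (PowerSeries.X_pow_dvd_iff.1 hdvd3) n (by omega)
        rw [map_sub, sub_eq_zero] at this
        exact this
      have hT3 : coeff n (T^3) = Coalgebra.comul (R := ℚ) (coeff (R := H) n (X^3)) := by
        rw [hT, ← map_pow, PowerSeries.coeff_map, hΔ]
      -- expand Y^3 as a triple sum
      have hY3 : Y^3 = ∑ i ∈ Finset.range (n+1), ∑ j ∈ Finset.range (n+1),
          ∑ k ∈ Finset.range (n+1), PowerSeries.X^(i+j+k) * U^(2*(i+j+k)+3)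
            * PowerSeries.C ((1:H) ⊗ₜ[ℚ]
                (coeff (R := H) i X * (coeff (R := H) j X * coeff (R := H) k X))) := by
        rw [hY, pow_succ, sq]
        simp only [Finset.sum_mul, Finset.mul_sum]
        refine Finset.sum_congr rfl fun i _ => Finset.sum_congr rfl fun j _ =>
          Finset.sum_congr rfl fun k _ => ?_
        rw [show (1:H) ⊗ₜ[ℚ] (coeff (R := H) i X * (coeff (R := H) j X * coeff (R := H) k X))
            = ((1:H) ⊗ₜ[ℚ] coeff (R := H) i X) * (((1:H) ⊗ₜ[ℚ] coeff (R := H) j X)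
              * ((1:H) ⊗ₜ[ℚ] coeff (R := H) k X)) from by
          rw [Algebra.TensorProduct.tmul_mul_tmul, Algebra.TensorProduct.tmul_mul_tmul,
            one_mul, one_mul],
          map_mul, map_mul]
        ring
      have hY3c : coeff n (Y^3)
          = ∑ i ∈ Finset.range (n+1), ∑ j ∈ Finset.range (n+1), ∑ k ∈ Finset.range (n+1),
              (if i+j+k ≤ n then (coeff (R := H) (n-(i+j+k)) (X^(2*(i+j+k)+3))) ⊗ₜ[ℚ]
                (coeff (R := H) i X * (coeff (R := H) j X * coeff (R := H) k X)) else 0) := by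
        rw [hY3, map_sum]
        refine Finset.sum_congr rfl fun i _ => ?_
        rw [map_sum]
        refine Finset.sum_congr rfl fun j _ => ?_
        rw [map_sum]
        exact Finset.sum_congr rfl fun k _ =>
          hterm (i+j+k) (2*(i+j+k)+3) (coeff (R := H) i X * (coeff (R := H) j X * coeff (R := H) k X)) n
      -- expansion of the coefficients of X^3
      have hX3m : ∀ m : ℕ, coeff (R := H) m (X^3)
          = ∑ i ∈ Finset.range (m+1), ∑ j ∈ Finset.range (m-i+1),
              coeff (R := H) i X * (coeff (R := H) j X * coeff (R := H) (m-i-j) X) := by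
        intro m
        rw [show X^3 = X * (X * X) from by ring, PowerSeries.coeff_mul,
          Finset.Nat.sum_antidiagonal_eq_sum_range_succ_mk]
        refine Finset.sum_congr rfl fun i _ => ?_
        rw [PowerSeries.coeff_mul, Finset.Nat.sum_antidiagonal_eq_sum_range_succ_mk,
          Finset.mul_sum]
      -- the main computation
      rw [hXsucc n, hBcocycle, ← hXsucc n, ← hT3, hcoeffT3, hY3c]
      rw [map_sum]
      rw [Finset.sum_congr rfl fun i _ => map_sum _ _ _]
      rw [Finset.sum_congr rfl fun i _ => Finset.sum_congr rfl fun j _ => map_sum _ _ _]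
      have happB : ∀ i j k : ℕ,
          (TensorProduct.map LinearMap.id B)
              (if i+j+k ≤ n then (coeff (R := H) (n-(i+j+k)) (X^(2*(i+j+k)+3))) ⊗ₜ[ℚ]
                (coeff (R := H) i X * (coeff (R := H) j X * coeff (R := H) k X)) else 0)
            = (if i+j+k ≤ n then (coeff (R := H) (n-(i+j+k)) (X^(2*(i+j+k)+3))) ⊗ₜ[ℚ]
                (B (coeff (R := H) i X * (coeff (R := H) j X * coeff (R := H) k X))) else 0) := by
        intro i j k
        split_ifs with h
        · rw [TensorProduct.map_tmul]; rfl
        · exact map_zero _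
      rw [Finset.sum_congr rfl fun i _ => Finset.sum_congr rfl fun j _ =>
        Finset.sum_congr rfl fun k _ => happB i j k]
      rw [ds_triple_sum n _ (fun i j k h => if_neg (by omega))]
      have hinner : ∀ m ∈ Finset.range (n+1),
          (∑ i ∈ Finset.range (m+1), ∑ j ∈ Finset.range (m-i+1),
            (if i+j+(m-i-j) ≤ n then (coeff (R := H) (n-(i+j+(m-i-j)))
                (X^(2*(i+j+(m-i-j))+3))) ⊗ₜ[ℚ]
              (B (coeff (R := H) i X * (coeff (R := H) j X * coeff (R := H) (m-i-j) X))) else 0))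
          = (coeff (R := H) (n-m) (X^(2*m+3))) ⊗ₜ[ℚ] (coeff (R := H) (m+1) X) := by
        intro m hm
        simp only [Finset.mem_range] at hm
        have hstep : ∀ i ∈ Finset.range (m+1), ∀ j ∈ Finset.range (m-i+1),
            (if i+j+(m-i-j) ≤ n then (coeff (R := H) (n-(i+j+(m-i-j)))
                (X^(2*(i+j+(m-i-j))+3))) ⊗ₜ[ℚ]
              (B (coeff (R := H) i X * (coeff (R := H) j X * coeff (R := H) (m-i-j) X))) else 0)
            = (coeff (R := H) (n-m) (X^(2*m+3))) ⊗ₜ[ℚ]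
                (B (coeff (R := H) i X * (coeff (R := H) j X * coeff (R := H) (m-i-j) X))) := by
          intro i hi j hj
          simp only [Finset.mem_range] at hi hj
          have hsum : i+j+(m-i-j) = m := by omega
          rw [hsum, if_pos (by omega)]
        rw [Finset.sum_congr rfl fun i hi => Finset.sum_congr rfl fun j hj => hstep i hi j hj]
        rw [Finset.sum_congr rfl fun i _ => (TensorProduct.tmul_sum _ _ _).symm,
          (TensorProduct.tmul_sum _ _ _).symm]
        rw [hXsucc m, hX3m m, map_sum]
        rw [Finset.sum_congr rfl fun i _ => (map_sum B _ _)]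
      rw [Finset.sum_congr rfl hinner]
      -- match with the target sum
      rw [Finset.sum_range_succ' (fun m => (coeff (R := H) (n+1-m) (X^(2*m+1))) ⊗ₜ[ℚ] (coeff (R := H) m X))
        (n+1)]
      rw [Nat.sub_zero, mul_zero, zero_add, pow_one, hX0', add_comm]
      congr 1
      refine Finset.sum_congr rfl fun i _ => ?_
      have h1 : n+1-(i+1) = n-i := by omega
      have h2 : 2*(i+1)+1 = 2*i+3 := by ring
      rw [h1, h2]

/-- For a graded connected commutative bialgebra `H` over `ℚ`, a
degree-one Hochschild 1-cocycle `B₊`, and the solution `X = 1 + g B₊(X³)` of the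
Dyson–Schwinger equation (toy case `Q = X`), the coefficients `X_l` generate a Hopf
subalgebra: each `Δ(X_l)` is a sum of terms `P ⊗ X_j` with `j ≤ l` and `P` a
polynomial in the `X_i`, `i ≤ l`. -/
theorem dyson_schwinger_hopf_subalgebra {H : Type*} [CommRing H] [Bialgebra ℚ H]
    (ℋ : ℕ → Submodule ℚ H)
    (hdirect : DirectSum.IsInternal ℋ)
    (h0 : ℋ 0 = (1 : Submodule ℚ H))
    (hmul : ∀ (p q : ℕ) (a b : H), a ∈ ℋ p → b ∈ ℋ q → a * b ∈ ℋ (p + q))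
    (B : H →ₗ[ℚ] H)
    (hBdeg : ∀ n : ℕ, ∀ x ∈ ℋ n, B x ∈ ℋ (n + 1))
    (hBcocycle : ∀ x : H, Coalgebra.comul (R := ℚ) (B x)
        = (B x) ⊗ₜ[ℚ] 1 + (TensorProduct.map LinearMap.id B) (Coalgebra.comul (R := ℚ) x))
    (X : PowerSeries H)
    (hX0 : PowerSeries.constantCoeff (R := H) X = 1)
    (hXg : ∀ l : ℕ, PowerSeries.coeff (R := H) l X ∈ ℋ l)
    (hXeq : X = 1 + PowerSeries.X * seriesExt B (X ^ 3)) :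
    ∀ l : ℕ, Coalgebra.comul (R := ℚ) (PowerSeries.coeff (R := H) l X) ∈
      LinearMap.range (TensorProduct.map
        (Subalgebra.toSubmodule
          (Algebra.adjoin ℚ {h : H | ∃ i ≤ l, h = PowerSeries.coeff (R := H) i X})).subtype
        (Submodule.span ℚ {h : H | ∃ j ≤ l, h = PowerSeries.coeff (R := H) j X}).subtype) := by
  intro l
  have hA : ∀ (r k : ℕ), k ≤ l → PowerSeries.coeff (R := H) k (X^r)
      ∈ Algebra.adjoin ℚ {h : H | ∃ i ≤ l, h = PowerSeries.coeff (R := H) i X} := by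
    intro r
    induction r with
    | zero =>
      intro k _
      rw [pow_zero, PowerSeries.coeff_one]
      split_ifs
      · exact one_mem _
      · exact zero_mem _
    | succ r ihr =>
      intro k hk
      rw [pow_succ, PowerSeries.coeff_mul]
      refine Subalgebra.sum_mem _ fun p hp => ?_
      rw [Finset.HasAntidiagonal.mem_antidiagonal] at hp
      exact mul_mem (ihr p.1 (by omega)) (Algebra.subset_adjoin ⟨p.2, by omega, rfl⟩)
  rw [ds_key B hBcocycle X hX0 hXeq l]
  refine Submodule.sum_mem _ fun m hm => ?_
  simp only [Finset.mem_range] at hm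
  refine ⟨(⟨_, hA (2*m+1) (l-m) (by omega)⟩ : (Subalgebra.toSubmodule
        (Algebra.adjoin ℚ {h : H | ∃ i ≤ l, h = PowerSeries.coeff (R := H) i X})))
      ⊗ₜ[ℚ] (⟨_, Submodule.subset_span ⟨m, by omega, rfl⟩⟩ :
        (Submodule.span ℚ {h : H | ∃ j ≤ l, h = PowerSeries.coeff (R := H) j X})), ?_⟩
  rw [TensorProduct.map_tmul]
  rfl
end

section
/- In the core Hopf algebra, every primitive generator has exactly one loop: a 1PI graph \Gamma with loop number L(\Gamma) \ge 2 contains a proper nonempty 1PI subgraph, hence has nonvanishing reduced coproduct. -/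
open scoped TensorProduct

/-- A Feynman graph: a finite set of vertices and of (labels of) internal edges,
with an endpoint assignment for edges and a number of external legs at each vertex. -/
structure FeynGraph where
  verts : Finset ℕ
  edges : Finset ℕ
  ends : ℕ → ℕ × ℕ
  extLegs : ℕ → ℕ
  wf : ∀ e ∈ edges, (ends e).1 ∈ verts ∧ (ends e).2 ∈ verts

namespace FeynGraph

/-- Two vertices are connected through the edge set `F`. -/
def conn (G : FeynGraph) (F : Finset ℕ) (a b : ℕ) : Prop :=
  Relation.ReflTransGen (fun x y => ∃ e ∈ F, G.ends e = (x, y) ∨ G.ends e = (y, x)) a b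

/-- A graph is connected if all its vertices are joined through its edges. -/
def Connected (G : FeynGraph) : Prop :=
  ∀ a ∈ G.verts, ∀ b ∈ G.verts, G.conn G.edges a b

/-- Deletion of a single internal edge. -/
def deleteEdge (G : FeynGraph) (e : ℕ) : FeynGraph :=
  { verts := G.verts, edges := G.edges.erase e, ends := G.ends, extLegs := G.extLegs,
    wf := fun f hf => G.wf f (Finset.mem_of_mem_erase hf) }

/-- One-particle irreducible: connected, not a tree (it has an internal edge and stays
connected), and still connected after deleting any single internal edge. -/
def OnePI (G : FeynGraph) : Prop :=
  G.Connected ∧ G.edges.Nonempty ∧ ∀ e ∈ G.edges, (G.deleteEdge e).Connected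

open scoped Classical in
/-- The vertices touched by the edge set `F`. -/
noncomputable def touched (G : FeynGraph) (F : Finset ℕ) : Finset ℕ :=
  G.verts.filter fun v => ∃ e ∈ F ∩ G.edges, (G.ends e).1 = v ∨ (G.ends e).2 = v

open scoped Classical in
/-- The subgraph of `G` spanned by the edge set `F`. -/
noncomputable def restrict (G : FeynGraph) (F : Finset ℕ) : FeynGraph where
  verts := G.touched F
  edges := F ∩ G.edges
  ends := G.ends
  extLegs := fun _ => 0
  wf := by
    intro e he
    have h1 := G.wf e (Finset.mem_inter.mp he).2
    constructor
    · exact Finset.mem_filter.mpr ⟨h1.1, ⟨e, he, Or.inl rfl⟩⟩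
    · exact Finset.mem_filter.mpr ⟨h1.2, ⟨e, he, Or.inr rfl⟩⟩

open scoped Classical in
/-- The edges of the connected component of the vertex `v` inside the edge set `F`. -/
noncomputable def compEdges (G : FeynGraph) (F : Finset ℕ) (v : ℕ) : Finset ℕ :=
  (F ∩ G.edges).filter fun e => G.conn F v (G.ends e).1

/-- The connected component of `v` in the subgraph spanned by `F`. -/
noncomputable def component (G : FeynGraph) (F : Finset ℕ) (v : ℕ) : FeynGraph :=
  G.restrict (G.compEdges F v)

open scoped Classical in
/-- The canonical (minimal) representative of the `F`-connected component of `v`. -/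
noncomputable def rep (G : FeynGraph) (F : Finset ℕ) (v : ℕ) : ℕ :=
  if h : (G.verts.filter fun w => G.conn F v w).Nonempty
  then (G.verts.filter fun w => G.conn F v w).min' h else v

/-- Contraction `G/F`: each connected component of the subgraph spanned by `F` is
shrunk to a single vertex. -/
noncomputable def contract (G : FeynGraph) (F : Finset ℕ) : FeynGraph where
  verts := G.verts.image (G.rep F)
  edges := G.edges \ F
  ends := fun e => (G.rep F (G.ends e).1, G.rep F (G.ends e).2)
  extLegs := G.extLegs
  wf := by
    intro e he
    have h1 := G.wf e (Finset.mem_sdiff.mp he).1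
    exact ⟨Finset.mem_image_of_mem _ h1.1, Finset.mem_image_of_mem _ h1.2⟩

/-- A good subgraph: a nonempty proper subset of the edges, all of whose connected
components are one-particle irreducible. -/
def GoodSub (G : FeynGraph) (F : Finset ℕ) : Prop :=
  F ⊆ G.edges ∧ F.Nonempty ∧ F ≠ G.edges ∧
    ∀ v ∈ (G.restrict F).verts, OnePI (G.component F v)

open scoped Classical in
/-- The finite set of good subgraphs (disjoint unions of 1PI proper subgraphs). -/
noncomputable def subFinset (G : FeynGraph) : Finset (Finset ℕ) :=
  G.edges.powerset.filter fun F => G.GoodSub F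

/-- Canonical representatives of the connected components of the subgraph spanned
by `F`. -/
noncomputable def compReps (G : FeynGraph) (F : Finset ℕ) : Finset ℕ :=
  (G.restrict F).verts.image (G.rep F)

/-- The number of connected components of a graph. -/
noncomputable def comps (G : FeynGraph) : ℕ := (G.verts.image (G.rep G.edges)).card

/-- The loop number `L = I - V + c` of a graph. -/
noncomputable def loopNum (G : FeynGraph) : ℤ :=
  (G.edges.card : ℤ) - (G.verts.card : ℤ) + (G.comps : ℤ)

end FeynGraph

/-- The core Hopf algebra: the free commutative algebra over `ℂ` on Feynman graphs. -/
noncomputable abbrev CoreAlg := MvPolynomial FeynGraph ℂ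

open MvPolynomial in
/-- The monomial of subgraph components: the product of the 1PI connected components
of the subgraph spanned by `F`. -/
noncomputable def subPoly (G : FeynGraph) (F : Finset ℕ) : CoreAlg :=
  ∏ v ∈ G.compReps F, X (G.component F v)

open MvPolynomial in
/-- The core coproduct `Δ(Γ) = Γ ⊗ 1 + 1 ⊗ Γ + ∑_{∅ ⊊ γ ⊊ Γ} γ ⊗ Γ/γ`, extended to
the free commutative algebra as an algebra homomorphism. -/
noncomputable def coreCoproduct : CoreAlg →ₐ[ℂ] CoreAlg ⊗[ℂ] CoreAlg :=
  aeval fun Γ : FeynGraph =>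
    (X Γ) ⊗ₜ[ℂ] 1 + 1 ⊗ₜ[ℂ] (X Γ) +
      ∑ F ∈ Γ.subFinset, (subPoly Γ F) ⊗ₜ[ℂ] (X (Γ.contract F))

open MvPolynomial in
/-- The counit of the core Hopf algebra: it kills every generator. -/
noncomputable def coreCounit : CoreAlg →ₐ[ℂ] ℂ := aeval fun _ : FeynGraph => 0

/-! ### Auxiliary graph-theoretic lemmas -/

section Aux

open Finset
open scoped Classical

namespace FeynGraph

variable (G : FeynGraph)

lemma conn_symm {F : Finset ℕ} {a b : ℕ} (h : G.conn F a b) : G.conn F b a := by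
  refine (@Relation.ReflTransGen.symmetric _ _ ⟨?_⟩).symm _ _ h
  rintro x y ⟨e, he, h'⟩
  exact ⟨e, he, h'.symm⟩

lemma conn_mono {F E : Finset ℕ} (hFE : F ⊆ E) {a b : ℕ} (h : G.conn F a b) :
    G.conn E a b := by
  refine Relation.ReflTransGen.mono ?_ _ _ h
  rintro x y ⟨e, he, h'⟩
  exact ⟨e, hFE he, h'⟩

lemma conn_single {F : Finset ℕ} {e : ℕ} (he : e ∈ F) :
    G.conn F (G.ends e).1 (G.ends e).2 :=
  Relation.ReflTransGen.single ⟨e, he, Or.inl rfl⟩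

lemma touched_subset_verts (F : Finset ℕ) : G.touched F ⊆ G.verts :=
  Finset.filter_subset _ _

lemma touched_mono {F E : Finset ℕ} (h : F ⊆ E) : G.touched F ⊆ G.touched E := by
  intro v hv
  rw [touched, mem_filter] at hv ⊢
  obtain ⟨hv1, e, he, hor⟩ := hv
  exact ⟨hv1, e, Finset.mem_inter.mpr ⟨h (Finset.mem_inter.mp he).1,
    (Finset.mem_inter.mp he).2⟩, hor⟩

lemma fst_mem_touched {F : Finset ℕ} (hF : F ⊆ G.edges) {e : ℕ} (he : e ∈ F) :
    (G.ends e).1 ∈ G.touched F := by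
  rw [touched, mem_filter]
  exact ⟨(G.wf e (hF he)).1, e, Finset.mem_inter.mpr ⟨he, hF he⟩, Or.inl rfl⟩

lemma snd_mem_touched {F : Finset ℕ} (hF : F ⊆ G.edges) {e : ℕ} (he : e ∈ F) :
    (G.ends e).2 ∈ G.touched F := by
  rw [touched, mem_filter]
  exact ⟨(G.wf e (hF he)).2, e, Finset.mem_inter.mpr ⟨he, hF he⟩, Or.inr rfl⟩

lemma conn_rep {F : Finset ℕ} {a : ℕ} (ha : a ∈ G.verts) :
    G.conn F a (G.rep F a) := by
  have hne : (G.verts.filter fun w => G.conn F a w).Nonempty :=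
    ⟨a, Finset.mem_filter.mpr ⟨ha, Relation.ReflTransGen.refl⟩⟩
  have hmem : G.rep F a ∈ G.verts.filter fun w => G.conn F a w := by
    rw [rep, dif_pos hne]
    exact Finset.min'_mem _ _
  exact (Finset.mem_filter.mp hmem).2

lemma rep_eq_of_conn {F : Finset ℕ} (hF : F ⊆ G.edges) {a b : ℕ}
    (h : G.conn F a b) : G.rep F a = G.rep F b := by
  rcases Relation.ReflTransGen.cases_head h with heq | ⟨c, ⟨e, he, hor⟩, _⟩
  · rw [heq]
  have ha : a ∈ G.verts := by
    rcases hor with h' | h'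
    · have := (G.wf e (hF he)).1; rwa [h'] at this
    · have := (G.wf e (hF he)).2; rwa [h'] at this
  have hb : b ∈ G.verts := by
    rcases Relation.ReflTransGen.cases_head (G.conn_symm h) with heq | ⟨c, ⟨f, hf, hor'⟩, _⟩
    · rwa [heq]
    rcases hor' with h' | h'
    · have := (G.wf f (hF hf)).1; rwa [h'] at this
    · have := (G.wf f (hF hf)).2; rwa [h'] at this
  have hset : (G.verts.filter fun w => G.conn F a w)
      = (G.verts.filter fun w => G.conn F b w) := by
    ext w
    simp only [mem_filter, and_congr_right_iff]
    intro _
    exact ⟨fun h' => (G.conn_symm h).trans h', fun h' => h.trans h'⟩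
  have hne : (G.verts.filter fun w => G.conn F a w).Nonempty :=
    ⟨a, Finset.mem_filter.mpr ⟨ha, Relation.ReflTransGen.refl⟩⟩
  have hne' : (G.verts.filter fun w => G.conn F b w).Nonempty :=
    ⟨b, Finset.mem_filter.mpr ⟨hb, Relation.ReflTransGen.refl⟩⟩
  rw [rep, rep, dif_pos hne, dif_pos hne']
  congr 1

lemma conn_of_rep_eq {F : Finset ℕ} {a b : ℕ} (ha : a ∈ G.verts) (hb : b ∈ G.verts)
    (h : G.rep F a = G.rep F b) : G.conn F a b := by
  have h1 := G.conn_rep (F := F) ha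
  have h2 := G.conn_rep (F := F) hb
  rw [h] at h1
  exact h1.trans (G.conn_symm h2)

/-- A path stays inside the `rep`-class of its starting point. -/
lemma conn_filter_rep {F : Finset ℕ} (hF : F ⊆ G.edges) {a b : ℕ}
    (h : G.conn F a b) :
    G.conn (F.filter fun f => G.rep F (G.ends f).1 = G.rep F a) a b := by
  induction h with
  | refl => exact Relation.ReflTransGen.refl
  | tail h' step ih =>
    rename_i c d
    obtain ⟨g, hg, hor⟩ := step
    have hcd : G.conn F c d := by
      rcases hor with h1 | h1
      · have := G.conn_single hg; rw [h1] at this; exact this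
      · have := G.conn_symm (G.conn_single hg); rw [h1] at this; exact this
    have hrep : G.rep F (G.ends g).1 = G.rep F a := by
      rcases hor with h1 | h1
      · rw [h1]
        exact (G.rep_eq_of_conn hF h').symm
      · rw [h1]
        exact (G.rep_eq_of_conn hF (h'.trans hcd)).symm
    exact ih.tail ⟨g, Finset.mem_filter.mpr ⟨hg, hrep⟩, hor⟩

/-- A candidate subgraph: nonempty, connected through its own edges, and containing
at least one independent cycle (`|F| ≥ |V(F)|`). -/
def GoodP (G : FeynGraph) (F : Finset ℕ) : Prop :=
  F ⊆ G.edges ∧ F.Nonempty ∧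
    (∀ a ∈ G.touched F, ∀ b ∈ G.touched F, G.conn F a b) ∧
    (G.touched F).card ≤ F.card

/-- A card-minimal candidate stays connected after deleting any one edge. -/
lemma key (F : Finset ℕ) (hP : GoodP G F)
    (hmin : ∀ E : Finset ℕ, GoodP G E → F.card ≤ E.card) :
    ∀ e ∈ F, ∀ a ∈ G.touched F, ∀ b ∈ G.touched F, G.conn (F.erase e) a b := by
  obtain ⟨hsub, hne, hconn, hcard⟩ := hP
  intro e he a ha b hb
  by_contra hnc
  set F' : Finset ℕ := F.erase e with hF'
  have hF'sub : F' ⊆ F := Finset.erase_subset _ _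
  have hF'edges : F' ⊆ G.edges := hF'sub.trans hsub
  set T : Finset ℕ := G.touched F with hT
  set R : Finset ℕ := T.image (G.rep F') with hR
  have haV : a ∈ G.verts := G.touched_subset_verts F ha
  have hbV : b ∈ G.verts := G.touched_subset_verts F hb
  have hrepab : G.rep F' a ≠ G.rep F' b := fun h => hnc (G.conn_of_rep_eq haV hbV h)
  have hRtwo : 2 ≤ R.card := by
    refine Finset.one_lt_card.mpr ⟨G.rep F' a, Finset.mem_image_of_mem _ ha,
      G.rep F' b, Finset.mem_image_of_mem _ hb, hrepab⟩
  -- fiber decompositions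
  have hTsum : T.card = ∑ r ∈ R, (T.filter fun v => G.rep F' v = r).card :=
    Finset.card_eq_sum_card_fiberwise (fun x hx => Finset.mem_image_of_mem _ hx)
  have hendsT : ∀ f ∈ F', (G.ends f).1 ∈ T := fun f hf =>
    G.fst_mem_touched hsub (hF'sub hf)
  have hFsum : F'.card = ∑ r ∈ R, (F'.filter fun f => G.rep F' (G.ends f).1 = r).card :=
    Finset.card_eq_sum_card_fiberwise
      (fun f hf => Finset.mem_image_of_mem _ (hendsT f hf))
  have hpos : 0 < F.card := Finset.card_pos.mpr ⟨e, he⟩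
  have hF'card : F'.card + 1 = F.card := by
    rw [hF', Finset.card_erase_of_mem he]; omega
  -- some class has at least as many edges as vertices
  have hex : ∃ r ∈ R, (T.filter fun v => G.rep F' v = r).card
      ≤ (F'.filter fun f => G.rep F' (G.ends f).1 = r).card := by
    by_contra hall
    push_neg at hall
    have hlt : ∀ r ∈ R, (F'.filter fun f => G.rep F' (G.ends f).1 = r).card + 1
        ≤ (T.filter fun v => G.rep F' v = r).card := fun r hr => hall r hr
    have hsum : F'.card + R.card ≤ T.card := by
      rw [hTsum, hFsum, Finset.card_eq_sum_ones R, ← Finset.sum_add_distrib]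
      exact Finset.sum_le_sum hlt
    omega
  obtain ⟨r, hrR, hrcard⟩ := hex
  set Tr : Finset ℕ := T.filter fun v => G.rep F' v = r with hTr
  set Er : Finset ℕ := F'.filter fun f => G.rep F' (G.ends f).1 = r with hEr
  have hErF' : Er ⊆ F' := Finset.filter_subset _ _
  have hEredges : Er ⊆ G.edges := hErF'.trans hF'edges
  have hTrne : Tr.Nonempty := by
    obtain ⟨x, hxT, hxr⟩ := Finset.mem_image.mp hrR
    exact ⟨x, Finset.mem_filter.mpr ⟨hxT, hxr⟩⟩
  have hTrpos : 0 < Tr.card := Finset.card_pos.mpr hTrne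
  have hErne : Er.Nonempty := Finset.card_pos.mp (lt_of_lt_of_le hTrpos hrcard)
  -- touched Er ⊆ Tr
  have htouch : G.touched Er ⊆ Tr := by
    intro v hv
    rw [touched, mem_filter] at hv
    obtain ⟨hvV, f, hf, hor⟩ := hv
    have hfEr : f ∈ Er := (Finset.mem_inter.mp hf).1
    have hfF' : f ∈ F' := hErF' hfEr
    have hrepf : G.rep F' (G.ends f).1 = r := (Finset.mem_filter.mp hfEr).2
    have hvT : v ∈ T := by
      rw [hT, touched, mem_filter]
      exact ⟨hvV, f, Finset.mem_inter.mpr ⟨hF'sub hfF', hF'edges hfF'⟩, hor⟩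
    refine Finset.mem_filter.mpr ⟨hvT, ?_⟩
    rcases hor with h1 | h1
    · rwa [h1] at hrepf
    · have hc : G.conn F' (G.ends f).1 v := by
        have := G.conn_single hfF'; rwa [h1] at this
      rw [← G.rep_eq_of_conn hF'edges hc]
      exact hrepf
  -- Er is a good candidate
  have hPEr : GoodP G Er := by
    refine ⟨hEredges, hErne, ?_, le_trans (Finset.card_le_card htouch) hrcard⟩
    intro x hx y hy
    have hxTr := htouch hx
    have hyTr := htouch hy
    have hxV : x ∈ G.verts := G.touched_subset_verts _ hx
    have hyV : y ∈ G.verts := G.touched_subset_verts _ hy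
    have hrx : G.rep F' x = r := (Finset.mem_filter.mp hxTr).2
    have hry : G.rep F' y = r := (Finset.mem_filter.mp hyTr).2
    have hconn' : G.conn F' x y := G.conn_of_rep_eq hxV hyV (hrx.trans hry.symm)
    have := G.conn_filter_rep hF'edges hconn'
    rw [hrx] at this
    exact this
  have := hmin Er hPEr
  have hle : Er.card ≤ F'.card := Finset.card_le_card hErF'
  omega

/-- Any 1PI graph with at least two independent cycles has a good subgraph. -/
lemma exists_goodSub (h1 : G.OnePI) (hcard : G.verts.card + 1 ≤ G.edges.card) :
    ∃ F : Finset ℕ, G.GoodSub F := by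
  obtain ⟨hGconn, hGne, _⟩ := h1
  -- the set of candidates is nonempty
  have hPedges : GoodP G G.edges := by
    refine ⟨Finset.Subset.refl _, hGne, ?_, ?_⟩
    · intro x hx y hy
      exact hGconn x (G.touched_subset_verts _ hx) y (G.touched_subset_verts _ hy)
    · exact le_trans (Finset.card_le_card (G.touched_subset_verts _)) (by omega)
  set S : Finset (Finset ℕ) := G.edges.powerset.filter (GoodP G) with hS
  have hSne : S.Nonempty :=
    ⟨G.edges, Finset.mem_filter.mpr ⟨Finset.mem_powerset_self _, hPedges⟩⟩
  obtain ⟨F, hFS, hFmin⟩ := S.exists_min_image Finset.card hSne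
  obtain ⟨hsub, hne, hconn, hcardle⟩ := (Finset.mem_filter.mp hFS).2
  have hmin : ∀ E : Finset ℕ, GoodP G E → F.card ≤ E.card := by
    intro E hE
    exact hFmin E (Finset.mem_filter.mpr ⟨Finset.mem_powerset.mpr hE.1, hE⟩)
  have hkey := G.key F (Finset.mem_filter.mp hFS).2 hmin
  have hTne : (G.touched F).Nonempty := by
    obtain ⟨e, he⟩ := hne
    exact ⟨_, G.fst_mem_touched hsub he⟩
  -- minimality forces |F| = |touched F|
  have hcardeq : F.card ≤ (G.touched F).card := by
    by_contra hgt
    push_neg at hgt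
    obtain ⟨e, he⟩ := hne
    have hpos : 0 < F.card := Finset.card_pos.mpr ⟨e, he⟩
    have hTpos : 0 < (G.touched F).card := Finset.card_pos.mpr hTne
    have hsubT : G.touched (F.erase e) ⊆ G.touched F :=
      G.touched_mono (Finset.erase_subset _ _)
    have hPE : GoodP G (F.erase e) := by
      refine ⟨(Finset.erase_subset _ _).trans hsub, ?_, ?_, ?_⟩
      · rw [← Finset.card_pos, Finset.card_erase_of_mem he]; omega
      · intro x hx y hy
        exact hkey e he x (hsubT hx) y (hsubT hy)
      · rw [Finset.card_erase_of_mem he]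
        exact le_trans (Finset.card_le_card hsubT) (by omega)
    have := hmin _ hPE
    rw [Finset.card_erase_of_mem he] at this
    omega
  -- F is a proper subset of the edges
  have hFproper : F ≠ G.edges := by
    intro hEq
    have h1 : (G.touched G.edges).card ≤ G.verts.card :=
      Finset.card_le_card (G.touched_subset_verts _)
    rw [hEq] at hcardeq
    omega
  refine ⟨F, hsub, hne, hFproper, ?_⟩
  -- components are 1PI
  intro v hv
  have hvT : v ∈ G.touched F := hv
  have hinter : F ∩ G.edges = F := Finset.inter_eq_left.mpr hsub
  have hcomp : G.compEdges F v = F := by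
    ext f
    rw [compEdges, Finset.mem_filter, hinter]
    constructor
    · exact fun h => h.1
    · intro hf
      exact ⟨hf, hconn v hvT _ (G.fst_mem_touched hsub hf)⟩
  have hcompG : G.component F v = G.restrict F := by
    rw [component, hcomp]
  rw [hcompG]
  -- the restricted graph is 1PI
  have hverts : (G.restrict F).verts = G.touched F := rfl
  have hedges : (G.restrict F).edges = F := by
    show F ∩ G.edges = F
    exact hinter
  refine ⟨?_, ?_, ?_⟩
  · -- connected
    intro x hx y hy
    rw [hverts] at hx hy
    show G.conn ((G.restrict F).edges) x y
    rw [hedges]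
    exact hconn x hx y hy
  · rw [hedges]; exact hne
  · -- still connected after deleting any edge
    intro e he x hx y hy
    rw [hedges] at he
    have hx' : x ∈ G.touched F := hx
    have hy' : y ∈ G.touched F := hy
    show G.conn (((G.restrict F).edges).erase e) x y
    rw [hedges]
    exact hkey e he x hx' y hy'

end FeynGraph

end Aux

open MvPolynomial in
/-- Every primitive generator of the core Hopf algebra has exactly
one loop: a 1PI graph `Γ` with loop number `L(Γ) = I - V + 1 ≥ 2` contains a proper
nonempty 1PI subgraph, hence has nonvanishing reduced coproduct. -/
theorem primitive_has_one_loop (Γ : FeynGraph) (hΓ : Γ.OnePI)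
    (hL : 2 ≤ (Γ.edges.card : ℤ) - (Γ.verts.card : ℤ) + 1) :
    Γ.subFinset.Nonempty ∧
      coreCoproduct (X Γ) ≠ (X Γ) ⊗ₜ[ℂ] 1 + 1 ⊗ₜ[ℂ] (X Γ) := by
  classical
  have hcard : Γ.verts.card + 1 ≤ Γ.edges.card := by omega
  obtain ⟨F, hF⟩ := Γ.exists_goodSub hΓ hcard
  have hmem : F ∈ Γ.subFinset := by
    rw [FeynGraph.subFinset, Finset.mem_filter, Finset.mem_powerset]
    exact ⟨hF.1, hF⟩
  have hSne : Γ.subFinset.Nonempty := ⟨F, hmem⟩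
  refine ⟨hSne, ?_⟩
  intro h
  have hco : coreCoproduct (X Γ) = (X Γ) ⊗ₜ[ℂ] 1 + 1 ⊗ₜ[ℂ] (X Γ) +
      ∑ F ∈ Γ.subFinset, (subPoly Γ F) ⊗ₜ[ℂ] (X (Γ.contract F)) := by
    rw [coreCoproduct, aeval_X]
  rw [hco] at h
  have hz : (∑ F ∈ Γ.subFinset, (subPoly Γ F) ⊗ₜ[ℂ] (X (Γ.contract F))) = 0 :=
    add_eq_left.mp h
  -- evaluate everything at 1
  set φ : CoreAlg →ₐ[ℂ] ℂ := aeval fun _ : FeynGraph => (1 : ℂ) with hφ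
  set ψ : CoreAlg ⊗[ℂ] CoreAlg →ₐ[ℂ] ℂ :=
    Algebra.TensorProduct.lift φ φ (fun a b => Commute.all _ _) with hψ
  have hφX : ∀ H : FeynGraph, φ (X H) = 1 := fun H => by rw [hφ, aeval_X]
  have hφsub : ∀ F : Finset ℕ, φ (subPoly Γ F) = 1 := by
    intro F
    rw [subPoly, map_prod]
    simp [hφX]
  have hψterm : ∀ F ∈ Γ.subFinset,
      ψ ((subPoly Γ F) ⊗ₜ[ℂ] (X (Γ.contract F))) = 1 := by
    intro F _
    rw [hψ, Algebra.TensorProduct.lift_tmul, hφsub, hφX, one_mul]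
  have hψz := congrArg ψ hz
  rw [map_sum, map_zero, Finset.sum_congr rfl hψterm, Finset.sum_const,
    nsmul_eq_mul, mul_one] at hψz
  have : Γ.subFinset.card = 0 := Nat.cast_eq_zero.mp hψz
  rw [Finset.card_eq_zero] at this
  rw [this] at hSne
  exact Finset.not_nonempty_empty hSne
end
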